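/- Let d ≥ 1, let G ∈ M_d(ℂ) be a Hermitian unitary matrix, let O ∈ M_d(ℂ) be Hermitian, and let ρ₁, ρ₂ ∈ M_d(ℂ) be density matrices. With W(θ) = exp(−iθG), O₁ = (O + G·O·G)/2, and O₂ = (O − G·O·G)/2, one has (1/(2π)) ∫₀^{2π} ( Tr[O·W(θ)·ρ₁·W(θ)†] − Tr[O·W(θ)·ρ₂·W(θ)†] )² dθ = (Tr[O₁(ρ₁−ρ₂)])² + (1/2)·(Tr[O₂(ρ₁−ρ₂)])² + (1/2)·(Tr[iO₂G(ρ₁−ρ₂)])², and in particular this expectation is at least (1/2)·(Tr[O₂(ρ₁−ρ₂)])². -/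

import Mathlib

open Matrix MeasureTheory
open scoped ComplexOrder

noncomputable section

/-- The rotation `W(θ) = exp(−iθG)` generated by a matrix `G`. -/
def Wrot {d : ℕ} (G : Matrix (Fin d) (Fin d) ℂ) (θ : ℝ) : Matrix (Fin d) (Fin d) ℂ :=
  NormedSpace.exp ((-(Complex.I * (θ : ℂ))) • G)

/-- The commuting part `O₁ = (O + G·O·G)/2` of `O` with respect to `G`. -/
def Opart1 {d : ℕ} (G O : Matrix (Fin d) (Fin d) ℂ) : Matrix (Fin d) (Fin d) ℂ :=
  (2⁻¹ : ℂ) • (O + G * O * G)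

/-- The anticommuting part `O₂ = (O − G·O·G)/2` of `O` with respect to `G`. -/
def Opart2 {d : ℕ} (G O : Matrix (Fin d) (Fin d) ℂ) : Matrix (Fin d) (Fin d) ℂ :=
  (2⁻¹ : ℂ) • (O - G * O * G)

lemma Wrot_eq {d : ℕ} (G : Matrix (Fin d) (Fin d) ℂ) (hG : G * G = 1) (θ : ℝ) :
    Wrot G θ = ((Real.cos θ : ℂ)) • (1 : Matrix (Fin d) (Fin d) ℂ)
      - ((Real.sin θ : ℂ) * Complex.I) • G := by
  rw [Wrot, NormedSpace.exp_eq_tsum ℂ, sub_eq_add_neg]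
  refine HasSum.tsum_eq (HasSum.even_add_odd ?_ ?_)
  · have h := (Complex.hasSum_cos (θ:ℂ)).smul_const (1 : Matrix (Fin d) (Fin d) ℂ)
    rw [← Complex.ofReal_cos] at h
    convert h using 2 with n
    · rfl
    rw [smul_pow, smul_smul]
    have hG2 : G ^ (2*n) = 1 := by rw [pow_mul, sq, hG, one_pow]
    have h2 : (-(Complex.I * (θ:ℂ)))^2 = -((θ:ℂ)^2) := by
      rw [neg_pow, mul_pow, Complex.I_sq]; ring
    have hpow : (-(Complex.I * (θ:ℂ))) ^ (2*n) = (-1)^n * (θ:ℂ)^(2*n) := by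
      rw [pow_mul, h2, neg_pow]; ring
    rw [hG2, hpow]
    congr 1
    field_simp
  · have h := (((Complex.hasSum_sin (θ:ℂ)).mul_left (-Complex.I)).smul_const G)
    rw [← Complex.ofReal_sin] at h
    have : -((Real.sin θ : ℂ) * Complex.I) • G = (-Complex.I * (Real.sin θ:ℂ)) • G := by
      congr 1; ring
    rw [← neg_smul, this]
    convert h using 2 with n
    · rfl
    rw [smul_pow, smul_smul]
    have hG2 : G ^ (2*n+1) = G := by rw [pow_succ, pow_mul, sq, hG, one_pow, one_mul]
    have h2 : (-(Complex.I * (θ:ℂ)))^2 = -((θ:ℂ)^2) := by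
      rw [neg_pow, mul_pow, Complex.I_sq]; ring
    have hpow : (-(Complex.I * (θ:ℂ))) ^ (2*n+1) = -Complex.I * ((-1)^n * (θ:ℂ)^(2*n+1)) := by
      rw [pow_succ, pow_mul, h2, neg_pow]; ring
    rw [hG2, hpow]
    congr 1
    field_simp

lemma Wrot_conjT {d : ℕ} (G : Matrix (Fin d) (Fin d) ℂ) (hGh : Gᴴ = G) (hG : G * G = 1)
    (θ : ℝ) : (Wrot G θ)ᴴ = ((Real.cos θ : ℂ)) • (1 : Matrix (Fin d) (Fin d) ℂ)
      + ((Real.sin θ : ℂ) * Complex.I) • G := by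
  rw [Wrot_eq G hG θ, conjTranspose_sub, conjTranspose_smul, conjTranspose_smul,
    conjTranspose_one, hGh, sub_eq_add_neg, ← neg_smul]
  congr 1
  · congr 1
    simp [Complex.ext_iff]
  · congr 1
    simp [Complex.ext_iff]

lemma trace_key {d : ℕ} (G O Δ : Matrix (Fin d) (Fin d) ℂ) (hGh : Gᴴ = G) (hG : G * G = 1)
    (θ : ℝ) :
    (O * (Wrot G θ * Δ * (Wrot G θ)ᴴ)).trace
      = (Opart1 G O * Δ).trace + (Real.cos (2*θ) : ℂ) * (Opart2 G O * Δ).trace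
        - (Real.sin (2*θ) : ℂ) * ((Complex.I • (Opart2 G O * G)) * Δ).trace := by
  rw [Wrot_conjT G hGh hG θ, Wrot_eq G hG θ]
  have hcos2 : (Real.cos (2*θ) : ℂ) = (Real.cos θ:ℂ)^2 - (Real.sin θ:ℂ)^2 := by
    rw [Real.cos_two_mul']; push_cast; ring
  have hsin2 : (Real.sin (2*θ) : ℂ) = 2 * (Real.sin θ:ℂ) * (Real.cos θ:ℂ) := by
    rw [Real.sin_two_mul]; push_cast; ring
  have hcs : (Real.sin θ:ℂ)^2 + (Real.cos θ:ℂ)^2 = 1 := by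
    rw [← Complex.ofReal_pow, ← Complex.ofReal_pow, ← Complex.ofReal_add,
      Real.sin_sq_add_cos_sq, Complex.ofReal_one]
  have ht2 : (O * (Δ * G)).trace = (G * (O * Δ)).trace := by
    rw [← Matrix.mul_assoc, trace_mul_comm]
  have ht4 : (G * (O * (G * Δ))).trace = (O * (G * (Δ * G))).trace := by
    rw [trace_mul_comm G, Matrix.mul_assoc, Matrix.mul_assoc]
  simp only [Opart1, Opart2, hcos2, hsin2, Matrix.mul_add, Matrix.add_mul, Matrix.mul_sub,
    Matrix.sub_mul, Matrix.smul_mul, Matrix.mul_smul, Matrix.mul_one, Matrix.one_mul,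
    trace_add, trace_sub, trace_smul, smul_eq_mul, Matrix.mul_assoc]
  rw [ht2]
  set t1 := (O * Δ).trace
  set t3 := (O * (G * Δ)).trace
  set t4 := (O * (G * (Δ * G))).trace
  rw [ht4, show G * (G * Δ) = Δ from by rw [← Matrix.mul_assoc, hG, Matrix.one_mul]]
  have hI : Complex.I^2 = -1 := Complex.I_sq
  linear_combination ((t1 + t4)/2) * hcs + (-(Real.sin θ:ℂ)^2 * t4) * hI

lemma integral_trig_sq (a b c : ℝ) :
    ∫ θ in (0:ℝ)..(2*Real.pi), (a + b * Real.cos (2*θ) - c * Real.sin (2*θ))^2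
      = 2*Real.pi*a^2 + Real.pi*b^2 + Real.pi*c^2 := by
  have key : ∀ x : ℝ, HasDerivAt (fun θ : ℝ =>
      a^2*θ + b^2*(θ/2 + Real.sin (4*θ)/8) + c^2*(θ/2 - Real.sin (4*θ)/8)
        + a*b*Real.sin (2*θ) + a*c*Real.cos (2*θ) + b*c*(Real.cos (4*θ)/4))
      ((a + b * Real.cos (2*x) - c * Real.sin (2*x))^2) x := by
    intro x
    have hs2 : HasDerivAt (fun θ : ℝ => Real.sin (2*θ)) (Real.cos (2*x) * 2) x := by
      simpa [Function.comp_def] using (Real.hasDerivAt_sin (2*x)).comp x ((hasDerivAt_id x).const_mul 2)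
    have hc2 : HasDerivAt (fun θ : ℝ => Real.cos (2*θ)) (-Real.sin (2*x) * 2) x := by
      simpa [Function.comp_def] using (Real.hasDerivAt_cos (2*x)).comp x ((hasDerivAt_id x).const_mul 2)
    have hs4 : HasDerivAt (fun θ : ℝ => Real.sin (4*θ)) (Real.cos (4*x) * 4) x := by
      simpa [Function.comp_def] using (Real.hasDerivAt_sin (4*x)).comp x ((hasDerivAt_id x).const_mul 4)
    have hc4 : HasDerivAt (fun θ : ℝ => Real.cos (4*θ)) (-Real.sin (4*x) * 4) x := by
      simpa [Function.comp_def] using (Real.hasDerivAt_cos (4*x)).comp x ((hasDerivAt_id x).const_mul 4)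
    have h := (((((hasDerivAt_id x).const_mul (a^2)).add
        ((((hasDerivAt_id x).div_const 2).add (hs4.div_const 8)).const_mul (b^2))).add
        ((((hasDerivAt_id x).div_const 2).sub (hs4.div_const 8)).const_mul (c^2))).add
        (hs2.const_mul (a*b))).add (hc2.const_mul (a*c)) |>.add
        ((hc4.div_const 4).const_mul (b*c))
    refine HasDerivAt.congr_deriv h ?_
    symm
    have h4c : Real.cos (4*x) = 2 * Real.cos (2*x)^2 - 1 := by
      rw [show (4:ℝ)*x = 2*(2*x) by ring, Real.cos_two_mul]
    have h4s : Real.sin (4*x) = 2 * Real.sin (2*x) * Real.cos (2*x) := by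
      rw [show (4:ℝ)*x = 2*(2*x) by ring, Real.sin_two_mul]
    have hpy := Real.sin_sq_add_cos_sq (2*x)
    rw [h4c, h4s]
    linear_combination (c^2) * hpy
  have hint : IntervalIntegrable
      (fun θ : ℝ => (a + b * Real.cos (2*θ) - c * Real.sin (2*θ))^2) volume 0 (2*Real.pi) :=
    (by continuity : Continuous fun θ : ℝ =>
      (a + b * Real.cos (2*θ) - c * Real.sin (2*θ))^2).intervalIntegrable 0 (2*Real.pi)
  rw [intervalIntegral.integral_eq_sub_of_hasDerivAt (fun x _ => key x) hint]
  have e1 : Real.sin (2*(2*Real.pi)) = 0 := by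
    rw [show (2:ℝ)*(2*Real.pi) = 2*Real.pi + 2*Real.pi by ring]
    simp [Real.sin_add, Real.sin_two_pi, Real.cos_two_pi]
  have e2 : Real.cos (2*(2*Real.pi)) = 1 := by
    rw [show (2:ℝ)*(2*Real.pi) = 2*Real.pi + 2*Real.pi by ring]
    simp [Real.cos_add, Real.sin_two_pi, Real.cos_two_pi]
  have e3 : Real.sin (4*(2*Real.pi)) = 0 := by
    rw [show (4:ℝ)*(2*Real.pi) = 2*(2*Real.pi) + 2*(2*Real.pi) by ring]
    simp [Real.sin_add, e1, e2]
  have e4 : Real.cos (4*(2*Real.pi)) = 1 := by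
    rw [show (4:ℝ)*(2*Real.pi) = 2*(2*Real.pi) + 2*(2*Real.pi) by ring]
    simp [Real.cos_add, e1, e2]
  simp only [e1, e2, e3, e4, mul_zero, zero_mul]
  ring_nf
  simp [Real.sin_two_pi, Real.cos_two_pi]
  ring

/-- For a Hermitian unitary `G`, a Hermitian observable `O` and density matrices
`ρ₁, ρ₂`, with `W(θ) = exp(−iθG)`, `O₁ = (O + GOG)/2` and `O₂ = (O − GOG)/2`:
`E_θ (Tr[O W ρ₁ W†] − Tr[O W ρ₂ W†])²
  = Tr[O₁(ρ₁−ρ₂)]² + ½ Tr[O₂(ρ₁−ρ₂)]² + ½ Tr[iO₂G(ρ₁−ρ₂)]² ≥ ½ Tr[O₂(ρ₁−ρ₂)]²`,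
with `θ` uniform on `[0, 2π]`. -/
theorem expectation_difference_sq
    (d : ℕ) (hd : 1 ≤ d)
    (G O : Matrix (Fin d) (Fin d) ℂ)
    (hGherm : G.IsHermitian) (hGunit : G * G = 1) (hO : O.IsHermitian)
    (ρ₁ ρ₂ : Matrix (Fin d) (Fin d) ℂ)
    (hρ₁ : ρ₁.PosSemidef) (hρ₁tr : ρ₁.trace = 1)
    (hρ₂ : ρ₂.PosSemidef) (hρ₂tr : ρ₂.trace = 1) :
    (1 / (2 * Real.pi)) * (∫ θ in (0:ℝ)..(2 * Real.pi),
        (((O * (Wrot G θ * ρ₁ * (Wrot G θ)ᴴ)).trace.re)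
          - ((O * (Wrot G θ * ρ₂ * (Wrot G θ)ᴴ)).trace.re)) ^ 2)
      = ((Opart1 G O * (ρ₁ - ρ₂)).trace.re) ^ 2
        + (1 / 2) * ((Opart2 G O * (ρ₁ - ρ₂)).trace.re) ^ 2
        + (1 / 2) * (((Complex.I • (Opart2 G O * G)) * (ρ₁ - ρ₂)).trace.re) ^ 2
    ∧ (1 / (2 * Real.pi)) * (∫ θ in (0:ℝ)..(2 * Real.pi),
        (((O * (Wrot G θ * ρ₁ * (Wrot G θ)ᴴ)).trace.re)
          - ((O * (Wrot G θ * ρ₂ * (Wrot G θ)ᴴ)).trace.re)) ^ 2)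
      ≥ (1 / 2) * ((Opart2 G O * (ρ₁ - ρ₂)).trace.re) ^ 2 := by
  set Δ : Matrix (Fin d) (Fin d) ℂ := ρ₁ - ρ₂ with hΔ
  set a : ℝ := (Opart1 G O * Δ).trace.re with ha
  set b : ℝ := (Opart2 G O * Δ).trace.re with hb
  set cc : ℝ := ((Complex.I • (Opart2 G O * G)) * Δ).trace.re with hcc
  have hfun : ∀ θ : ℝ,
      ((O * (Wrot G θ * ρ₁ * (Wrot G θ)ᴴ)).trace.re)
        - ((O * (Wrot G θ * ρ₂ * (Wrot G θ)ᴴ)).trace.re)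
      = a + b * Real.cos (2*θ) - cc * Real.sin (2*θ) := by
    intro θ
    have hlin : (O * (Wrot G θ * ρ₁ * (Wrot G θ)ᴴ)).trace
        - (O * (Wrot G θ * ρ₂ * (Wrot G θ)ᴴ)).trace
        = (O * (Wrot G θ * Δ * (Wrot G θ)ᴴ)).trace := by
      rw [hΔ]
      simp [Matrix.mul_sub, Matrix.sub_mul, trace_sub]
    rw [← Complex.sub_re, hlin, trace_key G O Δ hGherm hGunit θ]
    simp only [Complex.add_re, Complex.sub_re, Complex.mul_re, Complex.ofReal_re,
      Complex.ofReal_im]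
    ring
  have hI : (∫ θ in (0:ℝ)..(2 * Real.pi),
      (((O * (Wrot G θ * ρ₁ * (Wrot G θ)ᴴ)).trace.re)
        - ((O * (Wrot G θ * ρ₂ * (Wrot G θ)ᴴ)).trace.re)) ^ 2)
      = 2*Real.pi*a^2 + Real.pi*b^2 + Real.pi*cc^2 := by
    rw [intervalIntegral.integral_congr
      (g := fun θ : ℝ => (a + b * Real.cos (2*θ) - cc * Real.sin (2*θ))^2)
      (fun θ _ => by rw [hfun θ])]
    exact integral_trig_sq a b cc
  have hπ : Real.pi ≠ 0 := Real.pi_ne_zero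
  have heq : (1 / (2 * Real.pi)) * (∫ θ in (0:ℝ)..(2 * Real.pi),
      (((O * (Wrot G θ * ρ₁ * (Wrot G θ)ᴴ)).trace.re)
        - ((O * (Wrot G θ * ρ₂ * (Wrot G θ)ᴴ)).trace.re)) ^ 2)
      = a^2 + (1/2)*b^2 + (1/2)*cc^2 := by
    rw [hI]
    field_simp
  refine ⟨heq, ?_⟩
  rw [heq]
  nlinarith [sq_nonneg a, sq_nonneg cc]
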